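/- For every natural number n ≥ 1, Bₙ = (2·n!)/(π·e) · ∫₀^π exp(e^{cos θ} cos(sin θ)) · sin(e^{cos θ} sin(sin θ)) · sin(nθ) dθ, where Bₙ is the n-th Bell number. -/

import Mathlib

/-- Stirling numbers of the second kind. -/
def stirling : ℕ → ℕ → ℕ
  | 0, 0 => 1
  | 0, _ + 1 => 0
  | _ + 1, 0 => 0
  | n + 1, k + 1 => (k + 1) * stirling n (k + 1) + stirling n k

/-- Bell numbers, via the standard recurrence. -/
def bell : ℕ → ℕ
  | 0 => 1
  | n + 1 => ∑ k ∈ (Finset.range (n + 1)).attach, Nat.choose n k.1 * bell k.1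
decreasing_by exact Finset.mem_range.mp k.2

open Real

lemma hasSum_cexp (z : ℂ) : HasSum (fun n : ℕ => z ^ n / n.factorial) (Complex.exp z) := by
  rw [Complex.exp_eq_exp_ℂ]
  exact NormedSpace.expSeries_div_hasSum_exp z

lemma shift_eq (n m : ℕ) :
    ((m + 1 : ℕ) : ℝ) ^ (n + 1) / (m + 1).factorial =
      ∑ k ∈ Finset.range (n + 1), (n.choose k : ℝ) * ((m : ℝ) ^ k / m.factorial) := by
  have h1 : ((m : ℝ) + 1) ^ n = ∑ k ∈ Finset.range (n + 1),
      (m : ℝ) ^ k * (n.choose k : ℝ) := by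
    simpa using add_pow (m : ℝ) 1 n
  have hfac : ((m + 1).factorial : ℝ) = (m + 1) * m.factorial := by
    rw [Nat.factorial_succ]; push_cast; ring
  have hm1 : ((m : ℝ) + 1) ≠ 0 := by positivity
  have hmf : (m.factorial : ℝ) ≠ 0 := Nat.cast_ne_zero.2 m.factorial_ne_zero
  push_cast
  rw [hfac, pow_succ]
  rw [show ((m:ℝ)+1)^n * ((m:ℝ)+1) / (((m:ℝ)+1) * m.factorial)
      = ((m:ℝ)+1)^n / m.factorial by field_simp, h1, Finset.sum_div]
  exact Finset.sum_congr rfl fun k _ => by ring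

lemma summable_S : ∀ n : ℕ, Summable (fun m : ℕ => (m : ℝ) ^ n / m.factorial) := by
  intro n
  induction n using Nat.strong_induction_on with
  | _ n ih =>
    match n with
    | 0 => simpa using Real.summable_pow_div_factorial 1
    | Nat.succ n =>
      rw [← summable_nat_add_iff 1]
      have : (fun m : ℕ => ((m + 1 : ℕ) : ℝ) ^ (n + 1) / (m + 1).factorial)
          = fun m : ℕ => ∑ k ∈ Finset.range (n + 1),
              (n.choose k : ℝ) * ((m : ℝ) ^ k / m.factorial) := by
        funext m; exact shift_eq n m
      simp only [Nat.cast_add, Nat.cast_one] at this ⊢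
      rw [show (fun m : ℕ => ((m : ℝ) + 1) ^ (n + 1) / (m + 1).factorial)
          = fun m : ℕ => ∑ k ∈ Finset.range (n + 1),
              (n.choose k : ℝ) * ((m : ℝ) ^ k / m.factorial) by
        funext m; have := shift_eq n m; push_cast at this ⊢; exact this]
      exact summable_sum fun k hk =>
        ((ih k (Finset.mem_range.mp hk)).mul_left _)

lemma S_rec (n : ℕ) :
    (∑' m : ℕ, (m : ℝ) ^ (n + 1) / m.factorial) =
      ∑ k ∈ Finset.range (n + 1), (n.choose k : ℝ) *
        ∑' m : ℕ, (m : ℝ) ^ k / m.factorial := by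
  rw [Summable.tsum_eq_zero_add (summable_S (n + 1))]
  have h0 : ((0 : ℕ) : ℝ) ^ (n + 1) / (0 : ℕ).factorial = 0 := by simp
  rw [h0, zero_add]
  calc (∑' m : ℕ, ((m + 1 : ℕ) : ℝ) ^ (n + 1) / (m + 1).factorial)
      = ∑' m : ℕ, ∑ k ∈ Finset.range (n + 1),
          (n.choose k : ℝ) * ((m : ℝ) ^ k / m.factorial) := by
        exact tsum_congr fun m => shift_eq n m
    _ = ∑ k ∈ Finset.range (n + 1), (n.choose k : ℝ) *
          ∑' m : ℕ, (m : ℝ) ^ k / m.factorial := by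
        rw [Summable.tsum_finsetSum fun k hk => (summable_S k).mul_left _]
        exact Finset.sum_congr rfl fun k _ => (tsum_mul_left)

lemma dobinski : ∀ n : ℕ, (∑' m : ℕ, (m : ℝ) ^ n / m.factorial) = Real.exp 1 * bell n := by
  intro n
  induction n using Nat.strong_induction_on with
  | _ n ih =>
    match n with
    | 0 =>
      have : (∑' m : ℕ, (m : ℝ) ^ 0 / m.factorial) = Real.exp 1 := by
        rw [show Real.exp 1 = ∑' m : ℕ, (1 : ℝ) ^ m / m.factorial from
          ((Real.exp_eq_exp_ℝ ▸ NormedSpace.expSeries_div_hasSum_exp (1:ℝ)).tsum_eq).symm]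
        exact tsum_congr fun m => by simp
      rw [this]; simp [bell]
    | Nat.succ n =>
      rw [S_rec]
      have hb : (bell (n + 1) : ℝ) =
          ∑ k ∈ Finset.range (n + 1), (n.choose k : ℝ) * bell k := by
        rw [bell]
        rw [Finset.sum_attach (Finset.range (n + 1)) (fun k => Nat.choose n k * bell k)]
        push_cast; ring
      rw [hb, Finset.mul_sum]
      exact Finset.sum_congr rfl fun k hk => by
        rw [ih k (Finset.mem_range.mp hk)]; ring

lemma integral_cos_const_mul (c : ℝ) (hc : c ≠ 0) :
    ∫ θ in (0:ℝ)..π, Real.cos (c * θ) = Real.sin (c * π) / c := by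
  have := intervalIntegral.integral_comp_mul_left (a := (0:ℝ)) (b := π)
    (fun x => Real.cos x) hc
  rw [this]
  simp [integral_cos, smul_eq_mul, div_eq_inv_mul]

lemma orth (k n : ℕ) (hn : 1 ≤ n) :
    ∫ θ in (0:ℝ)..π, Real.sin (k * θ) * Real.sin (n * θ) =
      if k = n then π / 2 else 0 := by
  have key : ∀ θ : ℝ, Real.sin (k * θ) * Real.sin (n * θ) =
      (Real.cos (((k : ℝ) - n) * θ) - Real.cos (((k : ℝ) + n) * θ)) / 2 := by
    intro θ
    rw [Real.cos_sub_cos]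
    have h1 : (((k : ℝ) - n) * θ + ((k : ℝ) + n) * θ) / 2 = k * θ := by ring
    have h2 : (((k : ℝ) - n) * θ - ((k : ℝ) + n) * θ) / 2 = -(n * θ) := by ring
    rw [h1, h2, Real.sin_neg]; ring
  rw [intervalIntegral.integral_congr (fun θ _ => key θ)]
  have ig : ∀ c : ℝ, IntervalIntegrable (fun θ => Real.cos (c * θ)) MeasureTheory.volume 0 π :=
    fun c => (Real.continuous_cos.comp (continuous_const.mul continuous_id)).intervalIntegrable 0 π
  rw [intervalIntegral.integral_div, intervalIntegral.integral_sub (ig _) (ig _)]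
  have hsum : ((k : ℝ) + n) ≠ 0 := by
    have : (0:ℝ) < (k : ℝ) + n := by
      have : (1:ℝ) ≤ (n:ℝ) := by exact_mod_cast hn
      positivity
    linarith
  have hInt2 : ∫ θ in (0:ℝ)..π, Real.cos (((k : ℝ) + n) * θ) = 0 := by
    rw [integral_cos_const_mul _ hsum]
    have : ((k : ℝ) + n) * π = ((k + n : ℕ) : ℝ) * π := by push_cast; ring
    rw [this, Real.sin_nat_mul_pi, zero_div]
  rcases eq_or_ne k n with h | h
  · subst h
    simp only [sub_self, zero_mul, Real.cos_zero, if_pos rfl]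
    rw [hInt2, intervalIntegral.integral_const]
    simp
  · have hdiff : ((k : ℝ) - n) ≠ 0 := by
      intro hc; apply h
      have : (k : ℝ) = n := by linarith
      exact_mod_cast this
    rw [if_neg h, hInt2, integral_cos_const_mul _ hdiff]
    have : ((k : ℝ) - n) * π = (((k : ℤ) - n : ℤ) : ℝ) * π := by push_cast; ring
    rw [this, Real.sin_int_mul_pi]
    simp

lemma hasSum_inner (m : ℕ) (θ : ℝ) :
    HasSum (fun k : ℕ => (m : ℝ) ^ k / k.factorial * Real.sin (k * θ))
      ((Complex.exp (m * Complex.exp (θ * Complex.I))).im) := by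
  have h := (hasSum_cexp ((m : ℂ) * Complex.exp (θ * Complex.I))).mapL Complex.imCLM
  convert h using 2 with k
  have e0 : ((m : ℂ) * Complex.exp ((θ : ℂ) * Complex.I)) ^ k / (k.factorial : ℂ)
      = (((m : ℝ) ^ k / k.factorial : ℝ) : ℂ) *
          Complex.exp (((k * θ : ℝ) : ℂ) * Complex.I) := by
    rw [mul_pow, ← Complex.exp_nat_mul]
    rw [show ((k : ℂ) * ((θ : ℂ) * Complex.I)) = ((k * θ : ℝ) : ℂ) * Complex.I by
      push_cast; ring]
    push_cast; ring
  rw [Complex.imCLM_apply, e0, Complex.mul_im, Complex.ofReal_re, Complex.ofReal_im,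
    Complex.exp_ofReal_mul_I_im, zero_mul, add_zero]
  rw [Complex.imCLM_apply]

lemma exp_triple_im (θ : ℝ) :
    (Complex.exp (Complex.exp (Complex.exp (θ * Complex.I)))).im =
      Real.exp (Real.exp (Real.cos θ) * Real.cos (Real.sin θ)) *
        Real.sin (Real.exp (Real.cos θ) * Real.sin (Real.sin θ)) := by
  simp [Complex.exp_im, Complex.exp_re, Complex.exp_ofReal_mul_I_re,
    Complex.exp_ofReal_mul_I_im]

lemma hasSum_outer (θ : ℝ) :
    HasSum (fun m : ℕ => (Complex.exp (m * Complex.exp (θ * Complex.I))).im / m.factorial)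
      (Real.exp (Real.exp (Real.cos θ) * Real.cos (Real.sin θ)) *
        Real.sin (Real.exp (Real.cos θ) * Real.sin (Real.sin θ))) := by
  rw [← exp_triple_im θ]
  have h := (hasSum_cexp (Complex.exp (Complex.exp (θ * Complex.I)))).mapL Complex.imCLM
  convert h using 2 with m
  simp only [Complex.imCLM_apply, ← Complex.exp_nat_mul]
  rw [show ((m.factorial : ℂ)) = ((m.factorial : ℝ) : ℂ) by push_cast; rfl,
    Complex.div_ofReal_im]
  rw [Complex.imCLM_apply]

lemma cont_aux (m : ℕ) :
    Continuous fun θ : ℝ => (Complex.exp (m * Complex.exp (θ * Complex.I))).im :=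
  Complex.continuous_im.comp <| Complex.continuous_exp.comp <|
    continuous_const.mul <| Complex.continuous_exp.comp <|
      Complex.continuous_ofReal.mul continuous_const

lemma step1 (m n : ℕ) (hn : 1 ≤ n) :
    ∫ θ in (0:ℝ)..π, (Complex.exp (m * Complex.exp (θ * Complex.I))).im * Real.sin (n * θ)
      = π / 2 * ((m : ℝ) ^ n / n.factorial) := by
  have H : HasSum
      (fun k : ℕ => ∫ θ in (0:ℝ)..π,
        ((m : ℝ) ^ k / k.factorial * Real.sin (k * θ)) * Real.sin (n * θ))
      (∫ θ in (0:ℝ)..π,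
        (Complex.exp (m * Complex.exp (θ * Complex.I))).im * Real.sin (n * θ)) := by
    apply intervalIntegral.hasSum_integral_of_dominated_convergence
      (bound := fun k _ => (m : ℝ) ^ k / k.factorial)
    · intro k
      exact (((continuous_const.mul (Real.continuous_sin.comp
        (continuous_const.mul continuous_id))).mul (Real.continuous_sin.comp
        (continuous_const.mul continuous_id)))).aestronglyMeasurable
    · intro k
      filter_upwards with θ _
      have hk : (0:ℝ) ≤ (m : ℝ) ^ k / k.factorial := by positivity
      rw [norm_mul, norm_mul, Real.norm_eq_abs, Real.norm_eq_abs, Real.norm_eq_abs,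
        abs_of_nonneg hk]
      calc (m : ℝ) ^ k / k.factorial * |Real.sin (k * θ)| * |Real.sin (n * θ)|
          ≤ (m : ℝ) ^ k / k.factorial * 1 * 1 := by
            gcongr <;> exact Real.abs_sin_le_one _
        _ = (m : ℝ) ^ k / k.factorial := by ring
    · filter_upwards with θ _
      exact Real.summable_pow_div_factorial m
    · exact intervalIntegrable_const
    · filter_upwards with θ _
      exact (hasSum_inner m θ).mul_right _
  have Hval : ∀ k : ℕ,
      (∫ θ in (0:ℝ)..π, ((m : ℝ) ^ k / k.factorial * Real.sin (k * θ)) * Real.sin (n * θ))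
        = (m : ℝ) ^ k / k.factorial * (if k = n then π / 2 else 0) := by
    intro k
    simp only [mul_assoc]
    rw [intervalIntegral.integral_const_mul, orth k n hn]
  rw [← H.tsum_eq, tsum_congr Hval, tsum_eq_single n ?_]
  · rw [if_pos rfl]; ring
  · intro k hk; rw [if_neg hk, mul_zero]

lemma step2 (n : ℕ) (hn : 1 ≤ n) :
    (∫ θ in (0:ℝ)..π,
        Real.exp (Real.exp (Real.cos θ) * Real.cos (Real.sin θ)) *
          Real.sin (Real.exp (Real.cos θ) * Real.sin (Real.sin θ)) * Real.sin (n * θ))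
      = π / 2 * (1 / n.factorial) * (Real.exp 1 * bell n) := by
  have hre : ∀ (m : ℕ) (θ : ℝ), ((m : ℂ) * Complex.exp (θ * Complex.I)).re
      = m * Real.cos θ := by
    intro m θ
    rw [Complex.mul_re]
    simp [Complex.exp_ofReal_mul_I_re]
  have H : HasSum
      (fun m : ℕ => ∫ θ in (0:ℝ)..π,
        ((Complex.exp (m * Complex.exp (θ * Complex.I))).im / m.factorial) * Real.sin (n * θ))
      (∫ θ in (0:ℝ)..π,
        Real.exp (Real.exp (Real.cos θ) * Real.cos (Real.sin θ)) *
          Real.sin (Real.exp (Real.cos θ) * Real.sin (Real.sin θ)) * Real.sin (n * θ)) := by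
    apply intervalIntegral.hasSum_integral_of_dominated_convergence
      (bound := fun m _ => Real.exp 1 ^ m / m.factorial)
    · intro m
      exact (((cont_aux m).div_const _).mul (Real.continuous_sin.comp
        (continuous_const.mul continuous_id))).aestronglyMeasurable
    · intro m
      filter_upwards with θ hθ
      have h1 : |(Complex.exp (m * Complex.exp (θ * Complex.I))).im|
          ≤ Real.exp 1 ^ m := by
        calc |(Complex.exp (m * Complex.exp (θ * Complex.I))).im|
            ≤ ‖Complex.exp (m * Complex.exp (θ * Complex.I))‖ :=
              Complex.abs_im_le_norm _
          _ = Real.exp (((m : ℂ) * Complex.exp (θ * Complex.I)).re) := Complex.norm_exp _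
          _ = Real.exp (m * Real.cos θ) := by rw [hre]
          _ ≤ Real.exp (m * 1) := by
              apply Real.exp_le_exp.2
              have := Real.cos_le_one θ
              have : (m : ℝ) * Real.cos θ ≤ m * 1 := by
                apply mul_le_mul_of_nonneg_left this (Nat.cast_nonneg m)
              linarith
          _ = Real.exp 1 ^ m := by
              rw [mul_one, ← Real.exp_nat_mul, mul_one]
      rw [norm_mul, Real.norm_eq_abs, Real.norm_eq_abs, abs_div]
      rw [abs_of_nonneg (by positivity : (0:ℝ) ≤ (m.factorial : ℝ))]
      calc |(Complex.exp (m * Complex.exp (θ * Complex.I))).im| / m.factorial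
            * |Real.sin (n * θ)|
          ≤ (Real.exp 1 ^ m / m.factorial) * 1 := by
            gcongr
            exact Real.abs_sin_le_one _
        _ = Real.exp 1 ^ m / m.factorial := by ring
    · filter_upwards with θ _
      exact Real.summable_pow_div_factorial (Real.exp 1)
    · exact intervalIntegrable_const
    · filter_upwards with θ _
      exact (hasSum_outer θ).mul_right _
  have Hval : ∀ m : ℕ,
      (∫ θ in (0:ℝ)..π,
        ((Complex.exp (m * Complex.exp (θ * Complex.I))).im / m.factorial) * Real.sin (n * θ))
        = π / 2 * (1 / n.factorial) * ((m : ℝ) ^ n / m.factorial) := by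
    intro m
    have : ∀ θ : ℝ, ((Complex.exp (m * Complex.exp (θ * Complex.I))).im / m.factorial)
        * Real.sin (n * θ)
        = (1 / m.factorial) *
            ((Complex.exp (m * Complex.exp (θ * Complex.I))).im * Real.sin (n * θ)) := by
      intro θ; ring
    rw [intervalIntegral.integral_congr fun θ _ => this θ,
      intervalIntegral.integral_const_mul, step1 m n hn]
    ring
  rw [← H.tsum_eq, tsum_congr Hval, tsum_mul_left, dobinski n]

theorem cesaro_formula_real (n : ℕ) (hn : 1 ≤ n) :
    (bell n : ℝ) =
      2 * Nat.factorial n / (π * Real.exp 1) *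
        ∫ θ in (0:ℝ)..π,
          Real.exp (Real.exp (Real.cos θ) * Real.cos (Real.sin θ)) *
            Real.sin (Real.exp (Real.cos θ) * Real.sin (Real.sin θ)) * Real.sin (n * θ) := by
  rw [step2 n hn]
  have h1 : (n.factorial : ℝ) ≠ 0 := Nat.cast_ne_zero.2 n.factorial_ne_zero
  have h2 : π ≠ 0 := Real.pi_ne_zero
  have h3 : Real.exp 1 ≠ 0 := (Real.exp_pos 1).ne'
  field_simp
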